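/- Let (X, d, m) be a metric measure space with a function θ : X → (0, ∞) such that for every geodesic γ : [0,1] → X contained in a ball of radius R and every t ∈ (0,1): θ(γ(1))^{1/n} ≤ (1 + 4CR²) θ(γ(t))^{1/n} and θ(γ(t))^{1/n} ≤ (1 + 4CR²) θ(γ(1))^{1/n}, where C is a fixed constant, and θ is locally bounded. Then θ is constant on the interior of every geodesic: for every geodesic ξ : [0,1] → X and s, t ∈ (0,1), θ(ξ(t)) = θ(ξ(s)). -/

import Mathlib

open Set Metric

private lemma aux_step {X : Type*} [MetricSpace X] (θ : X → ℝ) (C n : ℝ)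
    (hest : ∀ (γ : ℝ → X),
      (∀ s ∈ Icc (0:ℝ) 1, ∀ t ∈ Icc (0:ℝ) 1,
        dist (γ s) (γ t) = dist (γ 0) (γ 1) * |s - t|) →
      ∀ R : ℝ, 0 < R → (∃ x₀ : X, ∀ s ∈ Icc (0:ℝ) 1, γ s ∈ ball x₀ R) →
      ∀ t ∈ Ioo (0:ℝ) 1,
        θ (γ 1) ^ (1 / n) ≤ (1 + 4 * C * R ^ 2) * θ (γ t) ^ (1 / n) ∧
        θ (γ t) ^ (1 / n) ≤ (1 + 4 * C * R ^ 2) * θ (γ 1) ^ (1 / n))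
    (ξ : ℝ → X)
    (hξ : ∀ s ∈ Icc (0:ℝ) 1, ∀ t ∈ Icc (0:ℝ) 1,
        dist (ξ s) (ξ t) = dist (ξ 0) (ξ 1) * |s - t|)
    (hD : 0 < dist (ξ 0) (ξ 1))
    {a b : ℝ} (ha : a ∈ Icc (0:ℝ) 1) (hb : b ∈ Icc (0:ℝ) 1) (hab : a ≠ b) :
    θ (ξ b) ^ (1 / n) ≤ (1 + 4 * C * (2 * dist (ξ 0) (ξ 1) * |b - a|) ^ 2) *
        θ (ξ ((a + b) / 2)) ^ (1 / n) ∧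
    θ (ξ ((a + b) / 2)) ^ (1 / n) ≤ (1 + 4 * C * (2 * dist (ξ 0) (ξ 1) * |b - a|) ^ 2) *
        θ (ξ b) ^ (1 / n) := by
  set D := dist (ξ 0) (ξ 1) with hDdef
  set γ : ℝ → X := fun u => ξ (a + u * (b - a)) with hγ
  have h0 : (0:ℝ) ∈ Icc (0:ℝ) 1 := by norm_num
  have h1 : (1:ℝ) ∈ Icc (0:ℝ) 1 := by norm_num
  have hmem : ∀ u ∈ Icc (0:ℝ) 1, a + u * (b - a) ∈ Icc (0:ℝ) 1 := by
    intro u hu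
    obtain ⟨hu0, hu1⟩ := hu
    constructor
    · nlinarith [mul_nonneg (by linarith : (0:ℝ) ≤ 1 - u) ha.1, mul_nonneg hu0 hb.1]
    · nlinarith [mul_nonneg (by linarith : (0:ℝ) ≤ 1 - u) (by linarith [ha.2] : (0:ℝ) ≤ 1 - a),
        mul_nonneg hu0 (by linarith [hb.2] : (0:ℝ) ≤ 1 - b)]
  have hγgeo : ∀ s ∈ Icc (0:ℝ) 1, ∀ t ∈ Icc (0:ℝ) 1,
      dist (γ s) (γ t) = dist (γ 0) (γ 1) * |s - t| := by
    intro s hs t ht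
    simp only [hγ]
    rw [hξ _ (hmem s hs) _ (hmem t ht), hξ _ (hmem 0 h0) _ (hmem 1 h1)]
    have e1 : a + s * (b - a) - (a + t * (b - a)) = (s - t) * (b - a) := by ring
    have e2 : a + 0 * (b - a) - (a + 1 * (b - a)) = -(b - a) := by ring
    rw [e1, e2, abs_mul, abs_neg]
    ring
  have hba : (0:ℝ) < |b - a| := abs_pos.2 (sub_ne_zero.2 (Ne.symm hab))
  have hR : (0:ℝ) < 2 * D * |b - a| := by positivity
  have hd01 : dist (γ 0) (γ 1) = D * |b - a| := by
    simp only [hγ]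
    rw [hξ _ (hmem 0 h0) _ (hmem 1 h1)]
    have e2 : a + 0 * (b - a) - (a + 1 * (b - a)) = -(b - a) := by ring
    rw [e2, abs_neg]
  have hball : ∀ u ∈ Icc (0:ℝ) 1, γ u ∈ ball (γ 0) (2 * D * |b - a|) := by
    intro u hu
    rw [mem_ball]
    have h := hγgeo u hu 0 h0
    rw [hd01] at h
    rw [h]
    have : |u - 0| ≤ 1 := by
      rw [sub_zero, abs_of_nonneg hu.1]; exact hu.2
    nlinarith [mul_pos hD hba]
  have half : (1/2 : ℝ) ∈ Ioo (0:ℝ) 1 := by norm_num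
  obtain ⟨h1l, h1r⟩ := hest γ hγgeo (2 * D * |b - a|) hR ⟨γ 0, hball⟩ (1/2) half
  have eb : γ 1 = ξ b := by
    simp only [hγ]; congr 1; ring
  have em : γ (1/2 : ℝ) = ξ ((a + b) / 2) := by
    simp only [hγ]; congr 1; ring
  rw [eb, em] at h1l h1r
  exact ⟨h1l, h1r⟩

private lemma aux_two {X : Type*} [MetricSpace X] (θ : X → ℝ) (C n : ℝ) (hC : 0 < C)
    (hpos : ∀ x : X, 0 < θ x)
    (hest : ∀ (γ : ℝ → X),
      (∀ s ∈ Icc (0:ℝ) 1, ∀ t ∈ Icc (0:ℝ) 1,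
        dist (γ s) (γ t) = dist (γ 0) (γ 1) * |s - t|) →
      ∀ R : ℝ, 0 < R → (∃ x₀ : X, ∀ s ∈ Icc (0:ℝ) 1, γ s ∈ ball x₀ R) →
      ∀ t ∈ Ioo (0:ℝ) 1,
        θ (γ 1) ^ (1 / n) ≤ (1 + 4 * C * R ^ 2) * θ (γ t) ^ (1 / n) ∧
        θ (γ t) ^ (1 / n) ≤ (1 + 4 * C * R ^ 2) * θ (γ 1) ^ (1 / n))
    (ξ : ℝ → X)
    (hξ : ∀ s ∈ Icc (0:ℝ) 1, ∀ t ∈ Icc (0:ℝ) 1,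
        dist (ξ s) (ξ t) = dist (ξ 0) (ξ 1) * |s - t|)
    (hD : 0 < dist (ξ 0) (ξ 1))
    {a b : ℝ} (ha : a ∈ Icc (0:ℝ) 1) (hb : b ∈ Icc (0:ℝ) 1) (hab : a ≠ b) :
    θ (ξ b) ^ (1 / n) ≤ (1 + 4 * C * (2 * dist (ξ 0) (ξ 1) * |b - a|) ^ 2) ^ 2 *
        θ (ξ a) ^ (1 / n) := by
  set D := dist (ξ 0) (ξ 1) with hDdef
  set K := 1 + 4 * C * (2 * D * |b - a|) ^ 2 with hK
  have hK0 : (0:ℝ) ≤ K := by positivity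
  have h1 := (aux_step θ C n hest ξ hξ hD ha hb hab).1
  have h2 := (aux_step θ C n hest ξ hξ hD hb ha (Ne.symm hab)).2
  rw [abs_sub_comm a b, add_comm b a] at h2
  calc θ (ξ b) ^ (1/n) ≤ K * θ (ξ ((a + b) / 2)) ^ (1/n) := h1
    _ ≤ K * (K * θ (ξ a) ^ (1/n)) := mul_le_mul_of_nonneg_left h2 hK0
    _ = K ^ 2 * θ (ξ a) ^ (1/n) := by ring

private lemma aux_le {X : Type*} [MetricSpace X] (θ : X → ℝ) (C n : ℝ) (hC : 0 < C)
    (hpos : ∀ x : X, 0 < θ x)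
    (hest : ∀ (γ : ℝ → X),
      (∀ s ∈ Icc (0:ℝ) 1, ∀ t ∈ Icc (0:ℝ) 1,
        dist (γ s) (γ t) = dist (γ 0) (γ 1) * |s - t|) →
      ∀ R : ℝ, 0 < R → (∃ x₀ : X, ∀ s ∈ Icc (0:ℝ) 1, γ s ∈ ball x₀ R) →
      ∀ t ∈ Ioo (0:ℝ) 1,
        θ (γ 1) ^ (1 / n) ≤ (1 + 4 * C * R ^ 2) * θ (γ t) ^ (1 / n) ∧
        θ (γ t) ^ (1 / n) ≤ (1 + 4 * C * R ^ 2) * θ (γ 1) ^ (1 / n))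
    (ξ : ℝ → X)
    (hξ : ∀ s ∈ Icc (0:ℝ) 1, ∀ t ∈ Icc (0:ℝ) 1,
        dist (ξ s) (ξ t) = dist (ξ 0) (ξ 1) * |s - t|)
    (hD : 0 < dist (ξ 0) (ξ 1))
    {s t : ℝ} (hs : s ∈ Icc (0:ℝ) 1) (ht : t ∈ Icc (0:ℝ) 1) (hst : s ≠ t) :
    θ (ξ t) ^ (1 / n) ≤ θ (ξ s) ^ (1 / n) := by
  set D := dist (ξ 0) (ξ 1) with hDdef
  have hts1 : |t - s| ≤ 1 := by
    rw [abs_sub_le_iff]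
    constructor <;> linarith [hs.1, hs.2, ht.1, ht.2]
  have key : ∀ N : ℕ, 1 ≤ N →
      θ (ξ t) ^ (1/n) ≤ Real.exp (32 * C * D ^ 2 / N) * θ (ξ s) ^ (1/n) := by
    intro N hN
    have hNpos : (0:ℝ) < N := by exact_mod_cast hN
    set δ := |t - s| / N with hδdef
    have hδpos : 0 < δ := div_pos (abs_pos.2 (sub_ne_zero.2 (Ne.symm hst))) hNpos
    set u : ℕ → ℝ := fun k => s + k * (t - s) / N with hu
    have humem : ∀ k : ℕ, k ≤ N → u k ∈ Icc (0:ℝ) 1 := by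
      intro k hk
      have hk' : (k:ℝ) ≤ N := by exact_mod_cast hk
      have hk0 : (0:ℝ) ≤ k := Nat.cast_nonneg k
      have hfrac0 : (0:ℝ) ≤ k / N := by positivity
      have hfrac1 : (k:ℝ) / N ≤ 1 := by
        rw [div_le_one hNpos]; exact hk'
      have huk : u k = (1 - k / N) * s + (k / N) * t := by
        simp only [hu]; field_simp; ring
      rw [huk]
      constructor
      · nlinarith [mul_nonneg (by linarith : (0:ℝ) ≤ 1 - (k:ℝ)/N) hs.1,
          mul_nonneg hfrac0 ht.1]
      · nlinarith [mul_nonneg (by linarith : (0:ℝ) ≤ 1 - (k:ℝ)/N) (by linarith [hs.2] : (0:ℝ) ≤ 1 - s),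
          mul_nonneg hfrac0 (by linarith [ht.2] : (0:ℝ) ≤ 1 - t)]
    have hdiff : ∀ k : ℕ, |u (k+1) - u k| = δ := by
      intro k
      have e : u (k+1) - u k = (t - s) / N := by
        simp only [hu]; push_cast; field_simp; ring
      rw [e, hδdef, abs_div, abs_of_pos hNpos]
    have hne : ∀ k : ℕ, u k ≠ u (k+1) := by
      intro k heq
      have := hdiff k
      rw [heq] at this
      simp at this
      linarith [hδpos, this.symm.le]
    set K := 1 + 4 * C * (2 * D * δ) ^ 2 with hK
    have hK1 : (1:ℝ) ≤ K := by nlinarith [sq_nonneg (2 * D * δ)]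
    have hK0 : (0:ℝ) ≤ K := by linarith
    have ind : ∀ k : ℕ, k ≤ N → θ (ξ (u k)) ^ (1/n) ≤ K ^ (2*k) * θ (ξ s) ^ (1/n) := by
      intro k
      induction k with
      | zero =>
        intro _
        have : u 0 = s := by simp [hu]
        rw [this]
        simp
      | succ k ih =>
        intro hk1
        have hk : k ≤ N := Nat.le_of_succ_le hk1
        have h2 := aux_two θ C n hC hpos hest ξ hξ hD (humem k hk) (humem (k+1) hk1) (hne k)
        rw [hdiff k] at h2
        rw [← hK] at h2
        calc θ (ξ (u (k+1))) ^ (1/n) ≤ K ^ 2 * θ (ξ (u k)) ^ (1/n) := h2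
          _ ≤ K ^ 2 * (K ^ (2*k) * θ (ξ s) ^ (1/n)) := by
              apply mul_le_mul_of_nonneg_left (ih hk) (by positivity)
          _ = K ^ (2*(k+1)) * θ (ξ s) ^ (1/n) := by ring
    have hN' := ind N le_rfl
    have huN : u N = t := by
      simp only [hu]; field_simp; ring
    rw [huN] at hN'
    have hKle : K ≤ Real.exp (4 * C * (2 * D * δ) ^ 2) := by
      have := Real.add_one_le_exp (4 * C * (2 * D * δ) ^ 2)
      rw [hK]; linarith
    have hpow : K ^ (2*N) ≤ Real.exp (4 * C * (2 * D * δ) ^ 2 * (2*N)) := by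
      calc K ^ (2*N) ≤ (Real.exp (4 * C * (2 * D * δ) ^ 2)) ^ (2*N) :=
            pow_le_pow_left₀ hK0 hKle _
        _ = Real.exp (4 * C * (2 * D * δ) ^ 2 * (2*N)) := by
            rw [← Real.exp_nat_mul]; congr 1; push_cast; ring
    have harg : 4 * C * (2 * D * δ) ^ 2 * (2*(N:ℝ)) ≤ 32 * C * D ^ 2 / N := by
      have hδle : δ ≤ 1 / N := by
        rw [hδdef]
        gcongr
      have hδsq : δ ^ 2 * N ≤ 1 / N := by
        have h1 : δ ^ 2 ≤ (1/N) ^ 2 := by nlinarith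
        have : (1/(N:ℝ)) ^ 2 * N = 1 / N := by field_simp
        nlinarith
      have hCD : (0:ℝ) ≤ 32 * C * D ^ 2 := by positivity
      have e : 4 * C * (2 * D * δ) ^ 2 * (2*(N:ℝ)) = 32 * C * D ^ 2 * (δ ^ 2 * N) := by ring
      rw [e, div_eq_mul_one_div]
      exact mul_le_mul_of_nonneg_left hδsq hCD
    have hexp : Real.exp (4 * C * (2 * D * δ) ^ 2 * (2*N)) ≤ Real.exp (32 * C * D ^ 2 / N) :=
      Real.exp_le_exp.2 harg
    have hθ0 : (0:ℝ) ≤ θ (ξ s) ^ (1/n) := Real.rpow_nonneg (hpos _).le _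
    calc θ (ξ t) ^ (1/n) ≤ K ^ (2*N) * θ (ξ s) ^ (1/n) := hN'
      _ ≤ Real.exp (32 * C * D ^ 2 / N) * θ (ξ s) ^ (1/n) :=
          mul_le_mul_of_nonneg_right (hpow.trans hexp) hθ0
  have hlim : Filter.Tendsto (fun N : ℕ => Real.exp (32 * C * D ^ 2 / N) * θ (ξ s) ^ (1/n))
      Filter.atTop (nhds (θ (ξ s) ^ (1/n))) := by
    have h1 : Filter.Tendsto (fun N : ℕ => 32 * C * D ^ 2 / (N:ℝ)) Filter.atTop (nhds 0) :=
      tendsto_const_div_atTop_nhds_zero_nat _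
    have h2 := (Real.continuous_exp.tendsto 0).comp h1
    have h3 := h2.mul_const (θ (ξ s) ^ (1/n))
    simpa using h3
  refine ge_of_tendsto hlim ?_
  filter_upwards [Filter.eventually_ge_atTop 1] with N hN using key N hN

theorem density_constant_along_geodesics
    {X : Type*} [MetricSpace X] (θ : X → ℝ) (C n : ℝ) (hC : 0 < C) (hn : 0 < n)
    (hpos : ∀ x : X, 0 < θ x)
    (hlocbdd : ∀ x : X, ∃ U ∈ nhds x, ∃ M : ℝ, ∀ y ∈ U, θ y ≤ M)
    (hest : ∀ (γ : ℝ → X),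
      (∀ s ∈ Icc (0:ℝ) 1, ∀ t ∈ Icc (0:ℝ) 1,
        dist (γ s) (γ t) = dist (γ 0) (γ 1) * |s - t|) →
      ∀ R : ℝ, 0 < R → (∃ x₀ : X, ∀ s ∈ Icc (0:ℝ) 1, γ s ∈ ball x₀ R) →
      ∀ t ∈ Ioo (0:ℝ) 1,
        θ (γ 1) ^ (1 / n) ≤ (1 + 4 * C * R ^ 2) * θ (γ t) ^ (1 / n) ∧
        θ (γ t) ^ (1 / n) ≤ (1 + 4 * C * R ^ 2) * θ (γ 1) ^ (1 / n)) :
    ∀ ξ : ℝ → X,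
      (∀ s ∈ Icc (0:ℝ) 1, ∀ t ∈ Icc (0:ℝ) 1,
        dist (ξ s) (ξ t) = dist (ξ 0) (ξ 1) * |s - t|) →
      ∀ s ∈ Ioo (0:ℝ) 1, ∀ t ∈ Ioo (0:ℝ) 1, θ (ξ t) = θ (ξ s) := by
  intro ξ hξ s hs t ht
  have hs' : s ∈ Icc (0:ℝ) 1 := Ioo_subset_Icc_self hs
  have ht' : t ∈ Icc (0:ℝ) 1 := Ioo_subset_Icc_self ht
  by_cases hst : s = t
  · rw [hst]
  · by_cases hD : dist (ξ 0) (ξ 1) = 0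
    · have h := hξ t ht' s hs'
      rw [hD, zero_mul] at h
      rw [dist_eq_zero.1 h]
    · have hD' : 0 < dist (ξ 0) (ξ 1) := lt_of_le_of_ne dist_nonneg (Ne.symm hD)
      have h1 := aux_le θ C n hC hpos hest ξ hξ hD' hs' ht' hst
      have h2 := aux_le θ C n hC hpos hest ξ hξ hD' ht' hs' (Ne.symm hst)
      have heq : θ (ξ t) ^ (1/n) = θ (ξ s) ^ (1/n) := le_antisymm h1 h2
      have e : ∀ x : ℝ, 0 < x → (x ^ (1/n)) ^ n = x := by
        intro x hx
        rw [← Real.rpow_mul hx.le, one_div_mul_cancel hn.ne', Real.rpow_one]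
      calc θ (ξ t) = (θ (ξ t) ^ (1/n)) ^ n := (e _ (hpos _)).symm
        _ = (θ (ξ s) ^ (1/n)) ^ n := by rw [heq]
        _ = θ (ξ s) := e _ (hpos _)
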